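/- Let (X, d) be a compact metric space and let (g_n)_{n∈ℕ} be a uniformly bounded, equicontinuous sequence of continuous real-valued functions on X. Suppose that for every nonempty open set U ⊆ X there exists c_U > 0 such that for every ε > 0 there exists N ∈ ℕ with the following property: for all n, m ≥ N and every x ∈ X there is a Borel probability measure Θ on X satisfying |g_{n+m}(x) − ∫ g_n dΘ| < ε and Θ(U) ≥ c_U. Then the sequence a_n := inf_{x∈X} g_n(x) converges to a limit a ∈ ℝ, and (g_n) converges uniformly on X to the constant function a. -/

import Mathlib

open MeasureTheory Filter Metric Set

set_option maxHeartbeats 1000000 in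
/-- Abstract form of the SOT-convergence theorem for the averaging operators `R_n`:
a uniformly bounded equicontinuous sequence `(g_n)` on a compact metric space such
that `g_{n+m}(x)` is, up to a uniformly small error, an average of `g_n` against a
probability measure giving every fixed nonempty open set `U` mass uniformly bounded
below, converges uniformly to the constant `a = lim_n inf_x g_n(x)`. -/
theorem uniform_convergence_to_constant_of_averaging
    {X : Type*} [MetricSpace X] [CompactSpace X] [Nonempty X]
    [MeasurableSpace X] [BorelSpace X]
    (g : ℕ → X → ℝ)
    (hcont : ∀ n : ℕ, Continuous (g n))
    (M : ℝ) (hbdd : ∀ n : ℕ, ∀ x : X, |g n x| ≤ M)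
    (hequi : ∀ ε : ℝ, 0 < ε → ∃ δ : ℝ, 0 < δ ∧ ∀ n : ℕ, ∀ x y : X,
      dist x y < δ → |g n x - g n y| < ε)
    (havg : ∀ U : Set X, IsOpen U → U.Nonempty → ∃ cU : ℝ, 0 < cU ∧
      ∀ ε : ℝ, 0 < ε → ∃ N : ℕ, ∀ n m : ℕ, N ≤ n → N ≤ m → ∀ x : X,
        ∃ Θ : Measure X, IsProbabilityMeasure Θ ∧
          |g (n + m) x - ∫ y, g n y ∂Θ| < ε ∧ ENNReal.ofReal cU ≤ Θ U) :
    ∃ a : ℝ,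
      Tendsto (fun n : ℕ => ⨅ x : X, g n x) atTop (nhds a) ∧
      TendstoUniformly g (fun _ => a) atTop := by
  classical
  set A : ℕ → ℝ := fun n => ⨅ x : X, g n x with hAdef
  set S : ℕ → ℝ := fun n => ⨆ x : X, g n x with hSdef
  have hbb : ∀ n, BddBelow (Set.range (g n)) := fun n =>
    ⟨-M, by rintro _ ⟨x, rfl⟩; linarith [(abs_le.1 (hbdd n x)).1]⟩
  have hba : ∀ n, BddAbove (Set.range (g n)) := fun n =>
    ⟨M, by rintro _ ⟨x, rfl⟩; exact (abs_le.1 (hbdd n x)).2⟩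
  have hAle : ∀ n x, A n ≤ g n x := fun n x => ciInf_le (hbb n) x
  have hleS : ∀ n x, g n x ≤ S n := fun n x => le_ciSup (hba n) x
  obtain ⟨x₁⟩ := ‹Nonempty X›
  have hAbd : ∀ n, |A n| ≤ M := by
    intro n
    rw [abs_le]
    exact ⟨le_ciInf fun y => (abs_le.1 (hbdd n y)).1,
      le_trans (hAle n x₁) (abs_le.1 (hbdd n x₁)).2⟩
  have hSbd : ∀ n, |S n| ≤ M := by
    intro n
    rw [abs_le]
    exact ⟨le_trans (abs_le.1 (hbdd n x₁)).1 (hleS n x₁),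
      ciSup_le fun y => (abs_le.1 (hbdd n y)).2⟩
  have hint : ∀ (n : ℕ) (Θ : Measure X), IsProbabilityMeasure Θ → Integrable (g n) Θ := by
    intro n Θ hΘ
    exact (integrable_const M).mono' (hcont n).aestronglyMeasurable
      (Eventually.of_forall fun x => by simpa using hbdd n x)
  have hintlb : ∀ (n : ℕ) (Θ : Measure X), IsProbabilityMeasure Θ →
      A n ≤ ∫ y, g n y ∂Θ := by
    intro n Θ hΘ
    calc A n = ∫ _, A n ∂Θ := by simp
    _ ≤ ∫ y, g n y ∂Θ := integral_mono (integrable_const _) (hint n Θ hΘ) fun y => hAle n y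
  -- Step A : the infima almost increase
  have hstep : ∀ ε : ℝ, 0 < ε → ∃ N, ∀ n m, N ≤ n → N ≤ m → A n - ε ≤ A (n + m) := by
    intro ε hε
    obtain ⟨c, hc, hprop⟩ := havg Set.univ isOpen_univ Set.univ_nonempty
    obtain ⟨N, hN⟩ := hprop ε hε
    refine ⟨N, fun n m hn hm => le_ciInf fun x => ?_⟩
    obtain ⟨Θ, hΘ, habs, -⟩ := hN n m hn hm x
    have h1 := hintlb n Θ hΘ
    have h2 := (abs_sub_lt_iff.1 habs).2
    linarith
  have hAbdd1 : IsBoundedUnder (· ≤ ·) atTop A :=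
    isBoundedUnder_of ⟨M, fun n => (abs_le.1 (hAbd n)).2⟩
  have hAbdd2 : IsBoundedUnder (· ≥ ·) atTop A :=
    isBoundedUnder_of ⟨-M, fun n => (abs_le.1 (hAbd n)).1⟩
  set a := liminf A atTop with hadef
  have hALla : ∀ ε : ℝ, 0 < ε → ∃ N, ∀ n, N ≤ n → A n ≤ a + ε := by
    intro ε hε
    obtain ⟨N, hN⟩ := hstep ε hε
    refine ⟨N, fun n hn => ?_⟩
    have h : A n - ε ≤ a := by
      apply le_liminf_of_le hAbdd1.isCoboundedUnder_ge
      filter_upwards [eventually_ge_atTop (n + N)] with k hk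
      have hk' : k = n + (k - n) := by omega
      rw [hk']
      exact hN n (k - n) hn (by omega)
    linarith
  have hlimsup_le : limsup A atTop ≤ a := by
    apply le_of_forall_pos_le_add
    intro ε hε
    obtain ⟨N, hN⟩ := hALla ε hε
    exact limsup_le_of_le hAbdd2.isCoboundedUnder_le (eventually_atTop.2 ⟨N, hN⟩)
  have hAtendsto : Tendsto A atTop (nhds a) :=
    tendsto_of_le_liminf_of_limsup_le le_rfl hlimsup_le hAbdd1 hAbdd2
  -- Step B : limsup of suprema is at most `a`
  have hSbdd1 : IsBoundedUnder (· ≤ ·) atTop S :=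
    isBoundedUnder_of ⟨M, fun n => (abs_le.1 (hSbd n)).2⟩
  have hSbdd2 : IsBoundedUnder (· ≥ ·) atTop S :=
    isBoundedUnder_of ⟨-M, fun n => (abs_le.1 (hSbd n)).1⟩
  set s := limsup S atTop with hsdef
  have hkey : ∀ ε₁ : ℝ, 0 < ε₁ → s ≤ a + 4 * ε₁ := by
    intro ε₁ hε₁
    obtain ⟨δ, hδ, hδprop⟩ := hequi ε₁ hε₁
    have hδ2 : 0 < δ / 2 := by linarith
    have hcov : (Set.univ : Set X) ⊆ ⋃ y : X, ball y (δ / 2) := fun x _ =>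
      Set.mem_iUnion.2 ⟨x, mem_ball_self hδ2⟩
    obtain ⟨t, ht⟩ := isCompact_univ.elim_finite_subcover
      (fun y : X => ball y (δ / 2)) (fun y => isOpen_ball) hcov
    choose cf hcf hcfN using fun y : X =>
      havg (ball y (δ / 2)) isOpen_ball ⟨y, mem_ball_self hδ2⟩
    have htne : t.Nonempty := by
      obtain ⟨y, hy, -⟩ := Set.mem_iUnion₂.1 (ht (Set.mem_univ x₁))
      exact ⟨y, hy⟩
    set c := t.inf' htne cf with hcdef
    have hc0 : 0 < c := (Finset.lt_inf'_iff htne).2 fun y _ => hcf y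
    -- c ≤ 1
    have hcf1 : ∀ y, cf y ≤ 1 := by
      intro y
      obtain ⟨N, hN⟩ := hcfN y 1 one_pos
      obtain ⟨Θ, hΘ, -, hΘU⟩ := hN N N le_rfl le_rfl x₁
      have h1 : ENNReal.ofReal (cf y) ≤ 1 := le_trans hΘU prob_le_one
      have := ENNReal.ofReal_le_one.1 h1
      exact this
    have hc1 : c ≤ 1 := le_trans (Finset.inf'_le cf htne.choose_spec) (hcf1 _)
    set ε₂ := c * ε₁ with hε₂def
    have hε₂ : 0 < ε₂ := mul_pos hc0 hε₁
    choose Nf hNf using fun y : X => hcfN y ε₂ hε₂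
    set N₀ := t.sup Nf with hN₀def
    obtain ⟨N₁, hN₁⟩ := hALla ε₂ hε₂
    have hev : ∀ᶠ n in atTop, S n < s + ε₂ :=
      eventually_lt_of_limsup_lt (by linarith) hSbdd1
    obtain ⟨n, hSn, hnge⟩ := (hev.and (eventually_ge_atTop (max N₀ N₁))).exists
    have hnN₀ : N₀ ≤ n := le_trans (le_max_left _ _) hnge
    have hnN₁ : N₁ ≤ n := le_trans (le_max_right _ _) hnge
    obtain ⟨x₀, -, hx₀⟩ := isCompact_univ.exists_isMinOn Set.univ_nonempty
      (hcont n).continuousOn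
    have hx₀min : ∀ y, g n x₀ ≤ g n y := fun y => hx₀ (Set.mem_univ y)
    have hx₀A : g n x₀ ≤ A n := le_ciInf hx₀min
    obtain ⟨i, hit, hx₀i⟩ : ∃ i ∈ t, x₀ ∈ ball i (δ / 2) := by
      simpa using ht (Set.mem_univ x₀)
    have hball : ∀ y ∈ ball i (δ / 2), g n y ≤ A n + ε₁ := by
      intro y hy
      have hd : dist x₀ y < δ := by
        have h1 := mem_ball.1 hx₀i
        have h2 := mem_ball.1 hy
        have := dist_triangle x₀ i y
        rw [dist_comm i y] at this
        linarith
      have h3 := (abs_sub_lt_iff.1 (hδprop n x₀ y hd)).2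
      linarith
    set K := A n + ε₁ with hKdef
    have hcci : c ≤ cf i := Finset.inf'_le cf hit
    have hSk : ∀ m, N₀ ≤ m → S (n + m) ≤ max K (c * K + (1 - c) * S n) + ε₂ := by
      intro m hm
      refine ciSup_le fun x => ?_
      obtain ⟨Θ, hΘ, habs, hΘU⟩ := hNf i n m
        (le_trans (Finset.le_sup hit) hnN₀) (le_trans (Finset.le_sup hit) hm) x
      haveI := hΘ
      set B := ball i (δ / 2) with hBdef
      have hBmeas : MeasurableSet B := measurableSet_ball
      set p := (Θ B).toReal with hpdef
      set q := (Θ Bᶜ).toReal with hqdef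
      have hpq : p + q = 1 := by
        rw [hpdef, hqdef, ← ENNReal.toReal_add (measure_ne_top _ _) (measure_ne_top _ _),
          measure_add_measure_compl hBmeas, measure_univ, ENNReal.toReal_one]
      have hcp : c ≤ p := by
        have h1 : ENNReal.ofReal c ≤ Θ B :=
          le_trans (ENNReal.ofReal_le_ofReal hcci) hΘU
        exact (ENNReal.ofReal_le_iff_le_toReal (measure_ne_top _ _)).1 h1
      have hq0 : 0 ≤ q := ENNReal.toReal_nonneg
      have hsplit : ∫ y, g n y ∂Θ = (∫ y in B, g n y ∂Θ) + ∫ y in Bᶜ, g n y ∂Θ :=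
        (integral_add_compl hBmeas (hint n Θ hΘ)).symm
      have hIB : ∫ y in B, g n y ∂Θ ≤ p * K := by
        calc ∫ y in B, g n y ∂Θ ≤ ∫ _ in B, K ∂Θ :=
              setIntegral_mono_on ((hint n Θ hΘ).integrableOn)
                (integrableOn_const (measure_ne_top _ _)) hBmeas
                fun y hy => hball y hy
        _ = p * K := by rw [setIntegral_const]; simp [hpdef, smul_eq_mul, measureReal_def]
      have hIC : ∫ y in Bᶜ, g n y ∂Θ ≤ q * S n := by
        calc ∫ y in Bᶜ, g n y ∂Θ ≤ ∫ _ in Bᶜ, S n ∂Θ :=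
              setIntegral_mono_on ((hint n Θ hΘ).integrableOn)
                (integrableOn_const (measure_ne_top _ _)) hBmeas.compl
                fun y _ => hleS n y
        _ = q * S n := by rw [setIntegral_const]; simp [hqdef, smul_eq_mul, measureReal_def]
      have hgx : g (n + m) x ≤ p * K + q * S n + ε₂ := by
        have h1 := (abs_sub_lt_iff.1 habs).1
        rw [hsplit] at h1
        linarith
      have hqe : q = 1 - p := by linarith
      have hfin : p * K + q * S n ≤ max K (c * K + (1 - c) * S n) := by
        rw [hqe]
        rcases le_total K (S n) with h | h
        · refine le_trans ?_ (le_max_right _ _)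
          nlinarith [mul_nonneg (sub_nonneg.2 hcp) (sub_nonneg.2 h)]
        · refine le_trans ?_ (le_max_left _ _)
          nlinarith [mul_nonneg (by linarith : (0:ℝ) ≤ 1 - p) (sub_nonneg.2 h)]
      linarith
    have hs_le : s ≤ max K (c * K + (1 - c) * S n) + ε₂ := by
      apply limsup_le_of_le hSbdd2.isCoboundedUnder_le
      filter_upwards [eventually_ge_atTop (n + N₀)] with k hk
      have hk' : k = n + (k - n) := by omega
      rw [hk']
      exact hSk (k - n) (by omega)
    have hAn : A n ≤ a + ε₂ := hN₁ n hnN₁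
    rcases max_cases K (c * K + (1 - c) * S n) with ⟨hmax, -⟩ | ⟨hmax, -⟩ <;>
      rw [hmax] at hs_le
    · have he : ε₂ = c * ε₁ := hε₂def
      have hee : ε₂ ≤ ε₁ := by nlinarith
      rw [hKdef] at hs_le
      linarith
    · rw [hKdef] at hs_le
      have he : ε₂ = c * ε₁ := hε₂def
      have h1 : (1 - c) * S n ≤ (1 - c) * (s + ε₂) :=
        mul_le_mul_of_nonneg_left hSn.le (by linarith)
      have h2 : c * s ≤ c * a + 4 * c * ε₁ := by
        nlinarith [mul_le_mul_of_nonneg_left hAn hc0.le]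
      by_contra hcon
      push_neg at hcon
      nlinarith [mul_pos hc0 (by linarith : (0:ℝ) < s - (a + 4 * ε₁))]
  have hslea : s ≤ a := by
    by_contra h
    push_neg at h
    have := hkey ((s - a) / 8) (by linarith)
    linarith
  -- conclusion
  refine ⟨a, hAtendsto, ?_⟩
  rw [Metric.tendstoUniformly_iff]
  intro ε hε
  have h1 : ∀ᶠ n in atTop, S n < a + ε :=
    eventually_lt_of_limsup_lt (lt_of_le_of_lt hslea (by linarith)) hSbdd1
  obtain ⟨N, hN⟩ := Metric.tendsto_atTop.1 hAtendsto ε hε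
  have h2 : ∀ᶠ n in atTop, dist (A n) a < ε := eventually_atTop.2 ⟨N, hN⟩
  filter_upwards [h1, h2] with n hn1 hn2 x
  rw [Real.dist_eq, abs_sub_lt_iff]
  have hd := abs_lt.1 (by rwa [Real.dist_eq] at hn2)
  exact ⟨by linarith [hAle n x], by linarith [hleS n x]⟩
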